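/- If F and G are cumulative distribution functions of real-valued random variables with distributions μ and ν having finite first moments, then W₁(μ, ν) = ∫_0^1 |F⁻¹(u) - G⁻¹(u)| du, where F⁻¹ and G⁻¹ denote the (generalized) quantile functions. -/

import Mathlib

open MeasureTheory ProbabilityTheory Set Filter
open scoped Topology ENNReal

/-- 1-Wasserstein (Kantorovich) distance between probability measures on ℝ. -/
noncomputable def W1 (μ ν : Measure ℝ) : ℝ :=
  sInf {c | ∃ π : Measure (ℝ × ℝ), IsProbabilityMeasure π ∧
    π.map Prod.fst = μ ∧ π.map Prod.snd = ν ∧ c = ∫ p, |p.1 - p.2| ∂π}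

/-- Generalized quantile function (generalized inverse of the cdf `r ↦ μ(-∞, r]`):
`F⁻¹(u) = inf {r : F(r) ≥ u}`. -/
noncomputable def quantile (μ : Measure ℝ) (u : ℝ) : ℝ :=
  sInf {r : ℝ | u ≤ (μ (Set.Iic r)).toReal}

section basics
variable (μ : Measure ℝ) [IsProbabilityMeasure μ] {u r : ℝ}

lemma quantile_set_eq : {r : ℝ | u ≤ (μ (Set.Iic r)).toReal} = {r : ℝ | u ≤ cdf μ r} := by
  simp [cdf_eq_real, measureReal_def]

lemma quantile_nonempty (hu : u < 1) : {r : ℝ | u ≤ cdf μ r}.Nonempty := by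
  obtain ⟨r, hr⟩ := ((tendsto_cdf_atTop μ).eventually (eventually_gt_nhds hu)).exists
  exact ⟨r, hr.le⟩

lemma quantile_bddBelow (hu : 0 < u) : BddBelow {r : ℝ | u ≤ cdf μ r} := by
  obtain ⟨b, hb⟩ := ((tendsto_cdf_atBot μ).eventually (eventually_lt_nhds hu)).exists
  exact ⟨b, fun s hs => le_of_not_gt fun h =>
    absurd (le_trans hs ((monotone_cdf μ) h.le)) (not_le.2 hb)⟩

lemma le_cdf_quantile (hu : u ∈ Set.Ioo (0:ℝ) 1) : u ≤ cdf μ (quantile μ u) := by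
  have hne := quantile_nonempty μ hu.2
  have hbd := quantile_bddBelow μ hu.1
  rw [quantile, quantile_set_eq]
  set S := {r : ℝ | u ≤ cdf μ r}
  have key : ∀ r, sInf S < r → u ≤ cdf μ r := by
    intro r hr
    obtain ⟨s, hsS, hs⟩ := (csInf_lt_iff hbd hne).mp hr
    exact le_trans hsS ((monotone_cdf μ) hs.le)
  have hrc := (cdf μ).right_continuous (sInf S)
  have : Tendsto (cdf μ) (𝓝[>] (sInf S)) (𝓝 (cdf μ (sInf S))) :=
    hrc.mono_left (nhdsWithin_mono _ Ioi_subset_Ici_self)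
  exact ge_of_tendsto this (eventually_nhdsWithin_of_forall fun r hr => key r hr)

lemma quantile_le_iff (hu : u ∈ Set.Ioo (0:ℝ) 1) :
    quantile μ u ≤ r ↔ u ≤ (μ (Set.Iic r)).toReal := by
  rw [← measureReal_def, ← cdf_eq_real]
  constructor
  · intro h
    exact le_trans (le_cdf_quantile μ hu) ((monotone_cdf μ) h)
  · intro h
    rw [quantile, quantile_set_eq]
    exact csInf_le (quantile_bddBelow μ hu.1) h

lemma Ici_quantile (hu : u ∈ Set.Ioo (0:ℝ) 1) :
    {t : ℝ | u ≤ (μ (Set.Iic t)).toReal} = Set.Ici (quantile μ u) := by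
  ext t; simp only [mem_setOf_eq, mem_Ici]
  rw [← quantile_le_iff μ hu]

end basics

/-- Measurable version of quantile, zero outside `(0,1)`. -/
noncomputable def qf (μ : Measure ℝ) : ℝ → ℝ :=
  (Set.Ioo (0:ℝ) 1).piecewise (quantile μ) 0

section qf
variable (μ : Measure ℝ) [IsProbabilityMeasure μ]

lemma qf_eq_on : Set.EqOn (qf μ) (quantile μ) (Set.Ioo (0:ℝ) 1) :=
  fun _ hu => Set.piecewise_eq_of_mem _ _ _ hu

lemma measurable_qf : Measurable (qf μ) := by
  apply measurable_of_Iic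
  intro r
  have : qf μ ⁻¹' Set.Iic r =
      (Set.Ioo (0:ℝ) 1 ∩ {u | u ≤ (μ (Set.Iic r)).toReal}) ∪
      ((Set.Ioo (0:ℝ) 1)ᶜ ∩ {u : ℝ | (0:ℝ) ≤ r}) := by
    ext u
    by_cases hu : u ∈ Set.Ioo (0:ℝ) 1
    · simp only [Set.mem_preimage, Set.mem_Iic, qf, Set.piecewise_eq_of_mem _ _ _ hu,
        Set.mem_union, Set.mem_inter_iff, hu, true_and, Set.mem_compl_iff, not_true,
        false_and, or_false, Set.mem_setOf_eq]
      exact quantile_le_iff μ hu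
    · simp only [Set.mem_preimage, Set.mem_Iic, qf, Set.piecewise_eq_of_notMem _ _ _ hu,
        Set.mem_union, Set.mem_inter_iff, hu, false_and, false_or, Set.mem_compl_iff,
        not_false_iff, true_and, Set.mem_setOf_eq, Pi.zero_apply]
  rw [this]
  exact ((measurableSet_Ioo.inter (measurableSet_Iic : MeasurableSet (Set.Iic _)))).union
    (measurableSet_Ioo.compl.inter (MeasurableSet.const _))

lemma map_qf : (volume.restrict (Set.Ioo (0:ℝ) 1)).map (qf μ) = μ := by
  have hprob : IsProbabilityMeasure (volume.restrict (Set.Ioo (0:ℝ) 1)) := by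
    constructor; simp
  have hmapprob : IsProbabilityMeasure ((volume.restrict (Set.Ioo (0:ℝ) 1)).map (qf μ)) :=
    Measure.isProbabilityMeasure_map (measurable_qf μ).aemeasurable
  refine Measure.ext_of_Iic _ _ (fun r => ?_)
  rw [Measure.map_apply (measurable_qf μ) measurableSet_Iic,
    Measure.restrict_apply' measurableSet_Ioo]
  have hset : qf μ ⁻¹' Set.Iic r ∩ Set.Ioo 0 1
      = {u : ℝ | u ≤ (μ (Set.Iic r)).toReal} ∩ Set.Ioo 0 1 := by
    ext u
    simp only [Set.mem_inter_iff, Set.mem_preimage, Set.mem_Iic, Set.mem_setOf_eq,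
      and_congr_left_iff]
    intro hu
    rw [qf_eq_on μ hu]
    exact quantile_le_iff μ hu
  rw [hset]
  set c := (μ (Set.Iic r)).toReal with hc
  have hc0 : 0 ≤ c := ENNReal.toReal_nonneg
  have hc1 : c ≤ 1 := by
    rw [hc]
    exact ENNReal.toReal_le_of_le_ofReal one_pos.le (by simpa using prob_le_one)
  have hid : {u : ℝ | u ≤ c} = Set.Iic c := rfl
  rw [hid]
  have hgoal : volume (Set.Iic c ∩ Set.Ioo 0 1) = ENNReal.ofReal c := by
    rcases lt_or_eq_of_le hc1 with h1 | h1
    · have : Set.Iic c ∩ Set.Ioo 0 1 = Set.Ioc 0 c := by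
        ext u
        simp only [Set.mem_inter_iff, Set.mem_Iic, Set.mem_Ioo, Set.mem_Ioc]
        exact ⟨fun ⟨h, h0, _⟩ => ⟨h0, h⟩, fun ⟨h0, h⟩ => ⟨h, h0, lt_of_le_of_lt h h1⟩⟩
      rw [this, Real.volume_Ioc, sub_zero]
    · have : Set.Iic c ∩ Set.Ioo 0 1 = Set.Ioo 0 1 := by
        rw [Set.inter_eq_right]
        intro u hu
        exact Set.mem_Iic.2 (le_of_lt (h1 ▸ hu.2))
      rw [this, Real.volume_Ioo, sub_zero, ← h1]
  rw [hgoal, hc, ENNReal.ofReal_toReal (measure_ne_top μ _)]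

end qf

section coupling
variable (μ ν : Measure ℝ) [IsProbabilityMeasure μ] [IsProbabilityMeasure ν]

lemma integrable_qf (hμ : Integrable id μ) :
    Integrable (qf μ) (volume.restrict (Set.Ioo (0:ℝ) 1)) := by
  have h := (integrable_map_measure (f := qf μ) (g := id)
      (by rw [map_qf μ]; exact hμ.aestronglyMeasurable) (measurable_qf μ).aemeasurable).mp
  rw [map_qf μ] at h
  exact h hμ

noncomputable def cpl : Measure (ℝ × ℝ) :=
  (volume.restrict (Set.Ioo (0:ℝ) 1)).map (fun u => (qf μ u, qf ν u))

instance : IsProbabilityMeasure (volume.restrict (Set.Ioo (0:ℝ) 1)) := by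
  constructor; simp

lemma measurable_pair : Measurable (fun u => (qf μ u, qf ν u)) :=
  (measurable_qf μ).prodMk (measurable_qf ν)

instance : IsProbabilityMeasure (cpl μ ν) :=
  Measure.isProbabilityMeasure_map (measurable_pair μ ν).aemeasurable

lemma cpl_fst : (cpl μ ν).map Prod.fst = μ := by
  rw [cpl, Measure.map_map measurable_fst (measurable_pair μ ν)]
  exact map_qf μ

lemma cpl_snd : (cpl μ ν).map Prod.snd = ν := by
  rw [cpl, Measure.map_map measurable_snd (measurable_pair μ ν)]
  exact map_qf ν

lemma cpl_cost : ∫ p, |p.1 - p.2| ∂(cpl μ ν)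
    = ∫ u in Set.Ioo (0:ℝ) 1, |quantile μ u - quantile ν u| := by
  rw [cpl, integral_map (measurable_pair μ ν).aemeasurable
    (by exact ((measurable_fst.sub measurable_snd).abs).aestronglyMeasurable)]
  refine setIntegral_congr_fun measurableSet_Ioo (fun u hu => ?_)
  simp [qf_eq_on μ hu, qf_eq_on ν hu]

end coupling

section lower

lemma vol_sym (x y : ℝ) :
    volume (Set.Ico x y ∪ Set.Ico y x) = ENNReal.ofReal |x - y| := by
  rcases le_total x y with h | h
  · rw [Set.Ico_eq_empty (not_lt.2 h), Set.union_empty, Real.volume_Ico,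
      abs_sub_comm, abs_of_nonneg (sub_nonneg.2 h)]
  · rw [Set.Ico_eq_empty (not_lt.2 h), Set.empty_union, Real.volume_Ico,
      abs_of_nonneg (sub_nonneg.2 h)]

lemma vol_inter_aux {a b : ℝ} (ha1 : a ≤ 1) (hb0 : 0 ≤ b) (hba : b ≤ a) :
    volume (Set.Ioc b a ∩ Set.Ioo 0 1) = ENNReal.ofReal (a - b) := by
  rcases lt_or_eq_of_le ha1 with h1 | h1
  · have : Set.Ioc b a ∩ Set.Ioo 0 1 = Set.Ioc b a := by
      rw [Set.inter_eq_left]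
      exact fun u hu => ⟨lt_of_le_of_lt hb0 hu.1, lt_of_le_of_lt hu.2 h1⟩
    rw [this, Real.volume_Ioc]
  · have : Set.Ioc b a ∩ Set.Ioo 0 1 = Set.Ioo b 1 := by
      subst h1
      ext u
      simp only [Set.mem_inter_iff, Set.mem_Ioc, Set.mem_Ioo]
      exact ⟨fun ⟨⟨h, _⟩, _, h'⟩ => ⟨h, h'⟩,
        fun ⟨h, h'⟩ => ⟨⟨h, h'.le⟩, lt_of_le_of_lt hb0 h, h'⟩⟩
    rw [this, Real.volume_Ioo, ← h1]

lemma vol_inter {a b : ℝ} (ha : 0 ≤ a ∧ a ≤ 1) (hb : 0 ≤ b ∧ b ≤ 1) :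
    volume ((Set.Ioc b a ∪ Set.Ioc a b) ∩ Set.Ioo 0 1) = ENNReal.ofReal |a - b| := by
  rcases le_total b a with h | h
  · rw [Set.Ioc_eq_empty (not_lt.2 h), Set.union_empty, vol_inter_aux ha.2 hb.1 h,
      abs_of_nonneg (sub_nonneg.2 h)]
  · rw [Set.Ioc_eq_empty (not_lt.2 h), Set.empty_union, vol_inter_aux hb.2 ha.1 h,
      abs_sub_comm, abs_of_nonneg (sub_nonneg.2 h)]

variable {π : Measure (ℝ × ℝ)} [IsProbabilityMeasure π]

lemma cost_lintegral :
    ∫⁻ p, ENNReal.ofReal |p.1 - p.2| ∂π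
      = ∫⁻ t, π {p : ℝ × ℝ | (p.1 ≤ t ∧ t < p.2) ∨ (p.2 ≤ t ∧ t < p.1)} := by
  have hT : MeasurableSet {q : (ℝ × ℝ) × ℝ |
      (q.1.1 ≤ q.2 ∧ q.2 < q.1.2) ∨ (q.1.2 ≤ q.2 ∧ q.2 < q.1.1)} := by
    refine MeasurableSet.union ?_ ?_
    · exact (measurableSet_le (measurable_fst.fst) measurable_snd).inter
        (measurableSet_lt measurable_snd (measurable_fst.snd))
    · exact (measurableSet_le (measurable_fst.snd) measurable_snd).inter
        (measurableSet_lt measurable_snd (measurable_fst.fst))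
  have h1 := Measure.prod_apply (μ := π) (ν := volume) hT
  have h2 := Measure.prod_apply_symm (μ := π) (ν := volume) hT
  rw [h1] at h2
  have hL : ∀ p : ℝ × ℝ, volume (Prod.mk p ⁻¹' {q : (ℝ × ℝ) × ℝ |
      (q.1.1 ≤ q.2 ∧ q.2 < q.1.2) ∨ (q.1.2 ≤ q.2 ∧ q.2 < q.1.1)})
      = ENNReal.ofReal |p.1 - p.2| := by
    intro p
    have : Prod.mk p ⁻¹' {q : (ℝ × ℝ) × ℝ |
        (q.1.1 ≤ q.2 ∧ q.2 < q.1.2) ∨ (q.1.2 ≤ q.2 ∧ q.2 < q.1.1)}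
        = Set.Ico p.1 p.2 ∪ Set.Ico p.2 p.1 := by
      ext t
      simp [Set.mem_Ico, Set.mem_union]
    rw [this, vol_sym]
  have hR : ∀ t : ℝ, π ((fun p : ℝ × ℝ => (p, t)) ⁻¹' {q : (ℝ × ℝ) × ℝ |
      (q.1.1 ≤ q.2 ∧ q.2 < q.1.2) ∨ (q.1.2 ≤ q.2 ∧ q.2 < q.1.1)})
      = π {p : ℝ × ℝ | (p.1 ≤ t ∧ t < p.2) ∨ (p.2 ≤ t ∧ t < p.1)} := by
    intro t; rfl
  simp_rw [hL] at h2
  simp_rw [hR] at h2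
  exact h2

end lower

section lower2
variable (μ ν : Measure ℝ) [IsProbabilityMeasure μ] [IsProbabilityMeasure ν]

lemma measurable_cdf_fun : Measurable (fun t : ℝ => (μ (Set.Iic t)).toReal) := by
  have : (fun t : ℝ => (μ (Set.Iic t)).toReal) = cdf μ := by
    ext t; rw [cdf_eq_real, measureReal_def]
  rw [this]
  exact (monotone_cdf μ).measurable

lemma cdf_mem_unit (t : ℝ) : 0 ≤ (μ (Set.Iic t)).toReal ∧ (μ (Set.Iic t)).toReal ≤ 1 :=
  ⟨ENNReal.toReal_nonneg, ENNReal.toReal_le_of_le_ofReal one_pos.le (by simpa using prob_le_one)⟩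

lemma fubini2 :
    ∫⁻ t, ENNReal.ofReal |(μ (Set.Iic t)).toReal - (ν (Set.Iic t)).toReal|
      = ∫⁻ u in Set.Ioo (0:ℝ) 1, ENNReal.ofReal |quantile μ u - quantile ν u| := by
  set ρ := volume.restrict (Set.Ioo (0:ℝ) 1) with hρ
  haveI : IsProbabilityMeasure ρ := by constructor; simp [hρ]
  set S := {q : ℝ × ℝ | (q.2 ≤ (μ (Set.Iic q.1)).toReal ∧ (ν (Set.Iic q.1)).toReal < q.2)
      ∨ (q.2 ≤ (ν (Set.Iic q.1)).toReal ∧ (μ (Set.Iic q.1)).toReal < q.2)} with hS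
  have hSm : MeasurableSet S := by
    refine MeasurableSet.union ?_ ?_
    · exact (measurableSet_le measurable_snd ((measurable_cdf_fun μ).comp measurable_fst)).inter
        (measurableSet_lt ((measurable_cdf_fun ν).comp measurable_fst) measurable_snd)
    · exact (measurableSet_le measurable_snd ((measurable_cdf_fun ν).comp measurable_fst)).inter
        (measurableSet_lt ((measurable_cdf_fun μ).comp measurable_fst) measurable_snd)
  have h1 := Measure.prod_apply (μ := volume) (ν := ρ) hSm
  have h2 := Measure.prod_apply_symm (μ := volume) (ν := ρ) hSm
  rw [h2] at h1
  -- left side : slice in u for fixed t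
  have hL : ∀ t : ℝ, ρ (Prod.mk t ⁻¹' S)
      = ENNReal.ofReal |(μ (Set.Iic t)).toReal - (ν (Set.Iic t)).toReal| := by
    intro t
    set a := (μ (Set.Iic t)).toReal
    set b := (ν (Set.Iic t)).toReal
    have hpre : Prod.mk t ⁻¹' S = Set.Ioc b a ∪ Set.Ioc a b := by
      ext u
      simp only [hS, Set.mem_preimage, Set.mem_setOf_eq, Set.mem_union, Set.mem_Ioc]
      tauto
    rw [hpre, hρ, Measure.restrict_apply ((measurableSet_Ioc).union measurableSet_Ioc),
      vol_inter (cdf_mem_unit μ t) (cdf_mem_unit ν t)]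
  -- right side : slice in t for fixed u
  have hR : ∀ᵐ u ∂ρ, volume ((fun t : ℝ => (t, u)) ⁻¹' S)
      = ENNReal.ofReal |quantile μ u - quantile ν u| := by
    rw [hρ]
    filter_upwards [ae_restrict_mem measurableSet_Ioo] with u hu
    have hpre : (fun t : ℝ => (t, u)) ⁻¹' S
        = Set.Ico (quantile μ u) (quantile ν u) ∪ Set.Ico (quantile ν u) (quantile μ u) := by
      ext t
      have hμt : u ≤ (μ (Set.Iic t)).toReal ↔ quantile μ u ≤ t := (quantile_le_iff μ hu).symm
      have hνt : u ≤ (ν (Set.Iic t)).toReal ↔ quantile ν u ≤ t := (quantile_le_iff ν hu).symm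
      simp only [hS, Set.mem_preimage, Set.mem_setOf_eq, Set.mem_union, Set.mem_Ico,
        ← not_le, ← hμt, ← hνt]
      try tauto
    rw [hpre, vol_sym]
  calc ∫⁻ t, ENNReal.ofReal |(μ (Set.Iic t)).toReal - (ν (Set.Iic t)).toReal|
      = ∫⁻ t, ρ (Prod.mk t ⁻¹' S) := by
        refine lintegral_congr (fun t => (hL t).symm)
    _ = ∫⁻ u, volume ((fun t : ℝ => (t, u)) ⁻¹' S) ∂ρ := h1.symm
    _ = ∫⁻ u, ENNReal.ofReal |quantile μ u - quantile ν u| ∂ρ := lintegral_congr_ae hR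

lemma marg_bound (π : Measure (ℝ × ℝ)) [IsProbabilityMeasure π]
    (h1 : π.map Prod.fst = μ) (h2 : π.map Prod.snd = ν) (t : ℝ) :
    ENNReal.ofReal |(μ (Set.Iic t)).toReal - (ν (Set.Iic t)).toReal|
      ≤ π {p : ℝ × ℝ | (p.1 ≤ t ∧ t < p.2) ∨ (p.2 ≤ t ∧ t < p.1)} := by
  set A := Prod.fst ⁻¹' (Set.Iic t) with hA
  set B := Prod.snd ⁻¹' (Set.Iic t) with hB
  set S := {p : ℝ × ℝ | (p.1 ≤ t ∧ t < p.2) ∨ (p.2 ≤ t ∧ t < p.1)} with hSdef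
  have hπA : π A = μ (Set.Iic t) := by
    rw [← h1, Measure.map_apply measurable_fst measurableSet_Iic]
  have hπB : π B = ν (Set.Iic t) := by
    rw [← h2, Measure.map_apply measurable_snd measurableSet_Iic]
  have hsub1 : A ⊆ B ∪ S := by
    intro p hp
    by_cases hpB : p ∈ B
    · exact Set.mem_union_left _ hpB
    · exact Set.mem_union_right _ (Or.inl ⟨hp, not_le.1 hpB⟩)
  have hsub2 : B ⊆ A ∪ S := by
    intro p hp
    by_cases hpA : p ∈ A
    · exact Set.mem_union_left _ hpA
    · exact Set.mem_union_right _ (Or.inr ⟨hp, not_le.1 hpA⟩)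
  have hd1 : μ (Set.Iic t) - ν (Set.Iic t) ≤ π S := by
    rw [← hπA, ← hπB, tsub_le_iff_right, add_comm]
    exact le_trans (measure_mono hsub1) (measure_union_le _ _)
  have hd2 : ν (Set.Iic t) - μ (Set.Iic t) ≤ π S := by
    rw [← hπA, ← hπB, tsub_le_iff_right, add_comm]
    exact le_trans (measure_mono hsub2) (measure_union_le _ _)
  rcases le_total (ν (Set.Iic t)) (μ (Set.Iic t)) with h | h
  · have htr : (ν (Set.Iic t)).toReal ≤ (μ (Set.Iic t)).toReal :=
      ENNReal.toReal_mono (measure_ne_top μ _) h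
    rw [abs_of_nonneg (sub_nonneg.2 htr), ← ENNReal.toReal_sub_of_le h (measure_ne_top μ _),
      ENNReal.ofReal_toReal (ENNReal.sub_ne_top (measure_ne_top μ _))]
    exact hd1
  · have htr : (μ (Set.Iic t)).toReal ≤ (ν (Set.Iic t)).toReal :=
      ENNReal.toReal_mono (measure_ne_top ν _) h
    rw [abs_of_nonpos (sub_nonpos.2 htr), neg_sub,
      ← ENNReal.toReal_sub_of_le h (measure_ne_top ν _),
      ENNReal.ofReal_toReal (ENNReal.sub_ne_top (measure_ne_top ν _))]
    exact hd2

end lower2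

section assembly
variable (μ ν : Measure ℝ) [IsProbabilityMeasure μ] [IsProbabilityMeasure ν]

lemma lower_bound (hμ : Integrable id μ) (hν : Integrable id ν)
    (π : Measure (ℝ × ℝ)) [IsProbabilityMeasure π]
    (h1 : π.map Prod.fst = μ) (h2 : π.map Prod.snd = ν) :
    ∫ u in Set.Ioo (0:ℝ) 1, |quantile μ u - quantile ν u| ≤ ∫ p, |p.1 - p.2| ∂π := by
  set ρ := volume.restrict (Set.Ioo (0:ℝ) 1) with hρ
  -- integrability of the cost
  have hfst : Integrable (fun p : ℝ × ℝ => p.1) π := by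
    have h := (integrable_map_measure (f := (Prod.fst : ℝ × ℝ → ℝ)) (g := id)
      (by rw [h1]; exact hμ.aestronglyMeasurable) measurable_fst.aemeasurable).mp
    rw [h1] at h
    exact h hμ
  have hsnd : Integrable (fun p : ℝ × ℝ => p.2) π := by
    have h := (integrable_map_measure (f := (Prod.snd : ℝ × ℝ → ℝ)) (g := id)
      (by rw [h2]; exact hν.aestronglyMeasurable) measurable_snd.aemeasurable).mp
    rw [h2] at h
    exact h hν
  have hmeas : Measurable (fun p : ℝ × ℝ => |p.1 - p.2|) :=
    (measurable_fst.sub measurable_snd).abs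
  have hInt : Integrable (fun p : ℝ × ℝ => |p.1 - p.2|) π := by
    refine (hfst.abs.add hsnd.abs).mono' hmeas.aestronglyMeasurable (ae_of_all _ fun p => ?_)
    rw [Real.norm_eq_abs, abs_abs]
    exact (abs_sub _ _)
  -- rewrite both sides as toReal of lintegrals
  have hRHS : ∫ p, |p.1 - p.2| ∂π = (∫⁻ p, ENNReal.ofReal |p.1 - p.2| ∂π).toReal :=
    integral_eq_lintegral_of_nonneg_ae (ae_of_all _ fun p => abs_nonneg _)
      hmeas.aestronglyMeasurable
  have haeq : (fun u => |quantile μ u - quantile ν u|) =ᵐ[ρ] (fun u => |qf μ u - qf ν u|) := by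
    rw [hρ]
    filter_upwards [ae_restrict_mem measurableSet_Ioo] with u hu
    rw [qf_eq_on μ hu, qf_eq_on ν hu]
  have hLHS : ∫ u in Set.Ioo (0:ℝ) 1, |quantile μ u - quantile ν u|
      = (∫⁻ u in Set.Ioo (0:ℝ) 1, ENNReal.ofReal |quantile μ u - quantile ν u|).toReal :=
    integral_eq_lintegral_of_nonneg_ae (ae_of_all _ fun u => abs_nonneg _)
      ((((measurable_qf μ).sub (measurable_qf ν)).abs).aestronglyMeasurable.congr haeq.symm)
  rw [hLHS, hRHS]
  -- finiteness of the RHS lintegral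
  have hfin : ∫⁻ p, ENNReal.ofReal |p.1 - p.2| ∂π ≠ ⊤ := by
    have := (hasFiniteIntegral_iff_ofReal (ae_of_all _ fun p : ℝ × ℝ => abs_nonneg (p.1 - p.2))).mp
      hInt.hasFiniteIntegral
    exact this.ne
  refine ENNReal.toReal_mono hfin ?_
  calc ∫⁻ u in Set.Ioo (0:ℝ) 1, ENNReal.ofReal |quantile μ u - quantile ν u|
      = ∫⁻ t, ENNReal.ofReal |(μ (Set.Iic t)).toReal - (ν (Set.Iic t)).toReal| :=
        (fubini2 μ ν).symm
    _ ≤ ∫⁻ t, π {p : ℝ × ℝ | (p.1 ≤ t ∧ t < p.2) ∨ (p.2 ≤ t ∧ t < p.1)} :=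
        lintegral_mono (marg_bound μ ν π h1 h2)
    _ = ∫⁻ p, ENNReal.ofReal |p.1 - p.2| ∂π := (cost_lintegral).symm

end assembly

/-- `W₁(μ, ν) = ∫_0^1 |F⁻¹(u) - G⁻¹(u)| du`. -/
theorem stmt_1 (μ ν : Measure ℝ) [IsProbabilityMeasure μ] [IsProbabilityMeasure ν]
    (hμ : Integrable id μ) (hν : Integrable id ν) :
    W1 μ ν = ∫ u in Set.Ioo (0:ℝ) 1, |quantile μ u - quantile ν u| := by
  have hmem : (∫ u in Set.Ioo (0:ℝ) 1, |quantile μ u - quantile ν u|) ∈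
      {c | ∃ π : Measure (ℝ × ℝ), IsProbabilityMeasure π ∧
        π.map Prod.fst = μ ∧ π.map Prod.snd = ν ∧ c = ∫ p, |p.1 - p.2| ∂π} :=
    ⟨cpl μ ν, inferInstance, cpl_fst μ ν, cpl_snd μ ν, (cpl_cost μ ν).symm⟩
  refine le_antisymm ?_ ?_
  · exact csInf_le ⟨0, fun c ⟨π, hπ, _, _, hc⟩ => by
      rw [hc]; exact integral_nonneg fun p => abs_nonneg _⟩ hmem
  · refine le_csInf ⟨_, hmem⟩ ?_
    rintro c ⟨π, hπ, h1, h2, rfl⟩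
    exact lower_bound μ ν hμ hν π h1 h2
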